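/- arXiv:0706.1701 — 5 statements merged into one kernel-verified Lean document; each statement's English description precedes it below -/
import Mathlib

section
/- Let R ⊆ S^r be a finite r-ary relation on a finite set S, and ε > 0. The following are equivalent: (1) for all nonzero functions f₁,…,f_r : S → [0,∞), |R(f₁,…,f_r) − |R|·∏|fᵢ|₁/|S|^r| < ε|R|·∏ max(fᵢ); (2) for all nonzero functions f₁,…,f_r : S → [0,1], |R(f₁,…,f_r) − |R|·∏|fᵢ|₁/|S|^r| < ε|R|; (3) R is an ε-expander relation, i.e. for all subsets S₁,…,S_r ⊆ S, |R(S₁,…,S_r) − |R|·∏|Sᵢ|/|S|^r| < ε|R|. -/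
open Finset

attribute [local instance] Classical.propDecidable

/-- `R(S₁,…,S_r)`: the number of tuples of `R` whose `i`-th coordinate lies in `T i`. -/
noncomputable def relCount {S : Type*} {r : ℕ} (R : Finset (Fin r → S))
    (T : Fin r → Finset S) : ℝ :=
  ((R.filter fun t => ∀ i, t i ∈ T i).card : ℝ)

/-- `R(f₁,…,f_r) = Σ_{(x₁,…,x_r)∈R} ∏ᵢ fᵢ(xᵢ)`. -/
noncomputable def relApply {S : Type*} {r : ℕ} (R : Finset (Fin r → S))
    (f : Fin r → S → ℝ) : ℝ :=
  ∑ t ∈ R, ∏ i, f i (t i)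

/-- `R` is an ε-expander relation. -/
def IsExpanderRel {S : Type*} [Fintype S] {r : ℕ} (ε : ℝ) (R : Finset (Fin r → S)) : Prop :=
  ∀ T : Fin r → Finset S,
    |relCount R T - (R.card : ℝ) * (∏ i, ((T i).card : ℝ)) / (Fintype.card S : ℝ) ^ r|
      < ε * R.card

set_option linter.unusedSectionVars false

namespace ExpanderAux

variable {S : Type*} [Fintype S] [Nonempty S] {r : ℕ}

noncomputable def indF (A : Finset S) : S → ℝ := fun x => if x ∈ A then 1 else 0

lemma indF_nonneg (A : Finset S) (x : S) : 0 ≤ indF A x := by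
  unfold indF; split <;> norm_num

lemma indF_le_one (A : Finset S) (x : S) : indF A x ≤ 1 := by
  unfold indF; split <;> norm_num

lemma sum_indF (A : Finset S) : ∑ x, indF A x = A.card := by
  simp [indF, Finset.sum_boole, Finset.filter_mem_eq_inter]

lemma ciSup_eq_sup' (f : S → ℝ) : (⨆ x, f x) = univ.sup' univ_nonempty f := by
  apply le_antisymm
  · exact ciSup_le fun x => Finset.le_sup' f (mem_univ x)
  · exact Finset.sup'_le _ _ fun x _ => le_ciSup (Set.Finite.bddAbove (Set.finite_range f)) x

lemma ciSup_indF (A : Finset S) (hA : A.Nonempty) : (⨆ x, indF A x) = 1 := by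
  rw [ciSup_eq_sup']
  apply le_antisymm (Finset.sup'_le _ _ fun x _ => indF_le_one A x)
  obtain ⟨a, ha⟩ := hA
  calc (1:ℝ) = indF A a := by simp [indF, ha]
    _ ≤ _ := Finset.le_sup' _ (mem_univ a)

noncomputable def errE (R : Finset (Fin r → S)) (f : Fin r → S → ℝ) : ℝ :=
  relApply R f - (R.card : ℝ) * (∏ i, ∑ x, f i x) / (Fintype.card S : ℝ) ^ r

lemma relApply_indF (R : Finset (Fin r → S)) (T : Fin r → Finset S) :
    relApply R (fun i => indF (T i)) = relCount R T := by
  unfold relApply relCount indF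
  have h1 : ∀ t : Fin r → S, (∏ i, if t i ∈ T i then (1:ℝ) else 0)
      = if ∀ i, t i ∈ T i then (1:ℝ) else 0 := by
    intro t
    rw [Finset.prod_boole]
    simp
  rw [Finset.sum_congr rfl fun t _ => h1 t, Finset.sum_boole]

lemma errE_indF (R : Finset (Fin r → S)) (T : Fin r → Finset S) :
    errE R (fun i => indF (T i)) =
      relCount R T - (R.card : ℝ) * (∏ i, ((T i).card : ℝ)) / (Fintype.card S : ℝ) ^ r := by
  unfold errE
  rw [relApply_indF]
  have : (∏ i, ∑ x, indF (T i) x) = ∏ i, ((T i).card : ℝ) :=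
    Finset.prod_congr rfl fun i _ => sum_indF (T i)
  rw [show (∏ i, ∑ x, (fun i => indF (T i)) i x) = ∏ i, ∑ x, indF (T i) x from rfl, this]

lemma errE_update (R : Finset (Fin r → S)) (f : Fin r → S → ℝ) (i : Fin r) (g : S → ℝ) :
    errE R (Function.update f i g) =
      (∑ t ∈ R, g (t i) * ∏ j ∈ univ.erase i, f j (t j))
        - (R.card : ℝ) * ((∑ x, g x) * ∏ j ∈ univ.erase i, ∑ x, f j x)
            / (Fintype.card S : ℝ) ^ r := by
  unfold errE relApply
  have h1 : ∀ t : Fin r → S, (∏ j, Function.update f i g j (t j))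
      = g (t i) * ∏ j ∈ univ.erase i, f j (t j) := by
    intro t
    rw [← Finset.mul_prod_erase univ (fun j => Function.update f i g j (t j)) (mem_univ i)]
    rw [Function.update_self]
    congr 1
    exact Finset.prod_congr rfl fun j hj => by
      rw [Function.update_of_ne (Finset.ne_of_mem_erase hj)]
  have h2 : (∏ j, ∑ x, Function.update f i g j x)
      = (∑ x, g x) * ∏ j ∈ univ.erase i, ∑ x, f j x := by
    rw [← Finset.mul_prod_erase univ (fun j => ∑ x, Function.update f i g j x) (mem_univ i)]
    rw [Function.update_self]
    congr 1
    exact Finset.prod_congr rfl fun j hj => by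
      rw [Function.update_of_ne (Finset.ne_of_mem_erase hj)]
  rw [h2, Finset.sum_congr rfl fun t _ => h1 t]

lemma errE_update_add (R : Finset (Fin r → S)) (f : Fin r → S → ℝ) (i : Fin r)
    (g h : S → ℝ) :
    errE R (Function.update f i (fun x => g x + h x)) =
      errE R (Function.update f i g) + errE R (Function.update f i h) := by
  simp only [errE_update, add_mul, Finset.sum_add_distrib]
  ring

lemma errE_update_smul (R : Finset (Fin r → S)) (f : Fin r → S → ℝ) (i : Fin r)
    (c : ℝ) (g : S → ℝ) :
    errE R (Function.update f i (fun x => c * g x)) =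
      c * errE R (Function.update f i g) := by
  simp only [errE_update, mul_assoc, ← Finset.mul_sum]
  ring

lemma errE_smul (R : Finset (Fin r → S)) (M : Fin r → ℝ) (g : Fin r → S → ℝ) :
    errE R (fun i x => M i * g i x) = (∏ i, M i) * errE R g := by
  unfold errE relApply
  have h1 : ∀ t : Fin r → S, (∏ i, M i * g i (t i)) = (∏ i, M i) * ∏ i, g i (t i) :=
    fun t => Finset.prod_mul_distrib
  have h2 : (∏ i, ∑ x, M i * g i x) = (∏ i, M i) * ∏ i, ∑ x, g i x := by
    rw [← Finset.prod_mul_distrib]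
    exact Finset.prod_congr rfl fun i _ => (Finset.mul_sum _ _ _).symm
  rw [Finset.sum_congr rfl fun t _ => h1 t, ← Finset.mul_sum, h2]
  ring

lemma key (L : (S → ℝ) → ℝ)
    (Ladd : ∀ g h : S → ℝ, L (fun x => g x + h x) = L g + L h)
    (Lsmul : ∀ (c : ℝ) (g : S → ℝ), L (fun x => c * g x) = c * L g)
    (K : ℝ) (hK : 0 < K)
    (hind : ∀ A : Finset S, A.Nonempty → |L (indF A)| < K) :
    ∀ (n : ℕ) (f : S → ℝ), (univ.filter fun x => f x ≠ 0).card ≤ n →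
      (∀ x, 0 ≤ f x) → (∀ x, f x ≤ 1) → (∃ x, f x ≠ 0) →
      |L f| < (univ.sup' univ_nonempty f) * K := by
  have hL0 : L (fun _ => (0:ℝ)) = 0 := by
    have h := Lsmul 0 (fun _ => 0)
    simpa using h
  intro n
  induction n with
  | zero =>
      rintro f hcard _ _ ⟨x, hx⟩
      exfalso
      have hmem : x ∈ univ.filter fun x => f x ≠ 0 := by simp [hx]
      have := Finset.card_pos.mpr ⟨x, hmem⟩
      omega
  | succ n ih =>
      intro f hcard h0 h1 hne
      set A : Finset S := univ.filter fun x => f x ≠ 0 with hA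
      have hAne : A.Nonempty := ⟨hne.choose, by simp [hA, hne.choose_spec]⟩
      set m : ℝ := A.inf' hAne f with hm
      have hfA : ∀ x ∈ A, f x ≠ 0 := fun x hx => (mem_filter.mp hx).2
      have hfA' : ∀ x, x ∉ A → f x = 0 := fun x hx => by
        by_contra h; exact hx (mem_filter.mpr ⟨mem_univ x, h⟩)
      have hm0 : 0 < m := by
        rw [hm, Finset.lt_inf'_iff]
        exact fun x hx => lt_of_le_of_ne (h0 x) (Ne.symm (hfA x hx))
      have hmle1 : m ≤ 1 := by
        obtain ⟨a, ha⟩ := hAne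
        exact le_trans (Finset.inf'_le f ha) (h1 a)
      obtain ⟨x₀, hx₀A, hx₀⟩ := Finset.exists_mem_eq_inf' hAne f
      set g : S → ℝ := fun x => f x - m * indF A x with hg
      have hgA : ∀ x, x ∉ A → g x = 0 := fun x hx => by
        simp [hg, indF, hx, hfA' x hx]
      have hg0 : ∀ x, 0 ≤ g x := by
        intro x
        by_cases hx : x ∈ A
        · have hle : m ≤ f x := Finset.inf'_le f hx
          simp only [hg, indF, hx, if_true, mul_one]
          linarith
        · rw [hgA x hx]
      have hg1 : ∀ x, g x ≤ 1 := fun x => by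
        have h1' := h1 x
        have h2' : 0 ≤ m * indF A x := mul_nonneg hm0.le (indF_nonneg A x)
        simp only [hg]; linarith
      have hgx₀ : g x₀ = 0 := by
        simp only [hg, indF, hx₀A, if_true, mul_one]
        rw [← hx₀]; ring
      have hsupp : (univ.filter fun x => g x ≠ 0) ⊆ A.erase x₀ := by
        intro x hx
        rw [mem_filter] at hx
        rcases hx with ⟨-, hx⟩
        have hxA : x ∈ A := by
          by_contra h; exact hx (hgA x h)
        refine mem_erase.mpr ⟨?_, hxA⟩
        rintro rfl; exact hx hgx₀
      have hgcard : (univ.filter fun x => g x ≠ 0).card ≤ n := by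
        have h1' := Finset.card_le_card hsupp
        have h2' := Finset.card_erase_of_mem hx₀A
        have h3' := Finset.card_pos.mpr ⟨x₀, hx₀A⟩
        omega
      have hfgl : f = fun x => g x + m * indF A x := by
        funext x; simp [hg]
      have hLf : L f = L g + m * L (indF A) := by
        conv_lhs => rw [hfgl]
        rw [Ladd g (fun x => m * indF A x), Lsmul m (indF A)]
      have hmle : m ≤ univ.sup' univ_nonempty f := by
        rw [hm, hx₀]
        exact Finset.le_sup' f (mem_univ x₀)
      have hiA := hind A hAne
      by_cases hgz : ∃ x, g x ≠ 0
      · have hsupg : univ.sup' univ_nonempty g ≤ univ.sup' univ_nonempty f - m := by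
          apply Finset.sup'_le
          intro x _
          by_cases hx : x ∈ A
          · have hle := Finset.le_sup' f (mem_univ x)
            simp only [hg, indF, hx, if_true, mul_one]
            linarith
          · rw [hgA x hx]; linarith
        have hig := ih g hgcard hg0 hg1 hgz
        calc |L f| ≤ |L g| + |m * L (indF A)| := by rw [hLf]; exact abs_add_le _ _
          _ = |L g| + m * |L (indF A)| := by rw [abs_mul, abs_of_nonneg hm0.le]
          _ < (univ.sup' univ_nonempty g) * K + m * K :=
              add_lt_add hig ((mul_lt_mul_iff_right₀ hm0).mpr hiA)
          _ ≤ (univ.sup' univ_nonempty f) * K := by nlinarith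
      · push_neg at hgz
        have hgeq : g = fun _ => (0:ℝ) := funext fun x => hgz x
        have hLg : L g = 0 := by rw [hgeq, hL0]
        rw [hLf, hLg, zero_add, abs_mul, abs_of_nonneg hm0.le]
        calc m * |L (indF A)| < m * K := (mul_lt_mul_iff_right₀ hm0).mpr hiA
          _ ≤ (univ.sup' univ_nonempty f) * K := by nlinarith

lemma mainB (R : Finset (Fin r → S)) (ε : ℝ) (hC : IsExpanderRel ε R)
    (f : Fin r → S → ℝ) (h0 : ∀ i x, 0 ≤ f i x) (h1 : ∀ i x, f i x ≤ 1)
    (hne : ∀ i, ∃ x, f i x ≠ 0) :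
    |errE R f| < ε * R.card := by
  have hK : 0 < ε * R.card := (abs_nonneg _).trans_lt (hC fun _ => ∅)
  suffices H : ∀ (m : ℕ) (f : Fin r → S → ℝ),
      (∀ i x, 0 ≤ f i x) → (∀ i x, f i x ≤ 1) → (∀ i, ∃ x, f i x ≠ 0) →
      (∀ i : Fin r, m ≤ (i : ℕ) → ∃ A : Finset S, A.Nonempty ∧ f i = indF A) →
      |errE R f| < ε * R.card by
    exact H r f h0 h1 hne (fun i hi => absurd hi (Nat.not_le.mpr i.isLt))
  intro m
  induction m with
  | zero =>
      intro f h0 h1 hne hind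
      choose T hT1 hT2 using fun i => hind i (Nat.zero_le _)
      have hf : f = fun i => indF (T i) := funext hT2
      rw [hf, errE_indF]
      exact hC T
  | succ m ih =>
      intro f h0 h1 hne hind
      by_cases hm : m < r
      · set i₀ : Fin r := ⟨m, hm⟩ with hi₀
        have hval : (i₀ : ℕ) = m := rfl
        have hkey := key (fun gg => errE R (Function.update f i₀ gg))
          (fun g h => errE_update_add R f i₀ g h)
          (fun c g => errE_update_smul R f i₀ c g)
          (ε * R.card) hK
          ?_ ((univ.filter fun x => f i₀ x ≠ 0).card) (f i₀) le_rfl (h0 i₀) (h1 i₀) (hne i₀)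
        · rw [show errE R (Function.update f i₀ (f i₀)) = errE R f by
              simp] at hkey
          have hsup : univ.sup' univ_nonempty (f i₀) ≤ 1 :=
            Finset.sup'_le _ _ fun x _ => h1 i₀ x
          exact hkey.trans_le (mul_le_of_le_one_left hK.le hsup)
        · intro A hAne
          apply ih (Function.update f i₀ (indF A))
          · intro i x
            by_cases h : i = i₀
            · subst h; rw [Function.update_self]; exact indF_nonneg A x
            · rw [Function.update_of_ne h]; exact h0 i x
          · intro i x
            by_cases h : i = i₀
            · subst h; rw [Function.update_self]; exact indF_le_one A x
            · rw [Function.update_of_ne h]; exact h1 i x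
          · intro i
            by_cases h : i = i₀
            · subst h
              obtain ⟨a, ha⟩ := hAne
              refine ⟨a, ?_⟩
              rw [Function.update_self]
              simp [indF, ha]
            · rw [Function.update_of_ne h]; exact hne i
          · intro i hi
            by_cases h : i = i₀
            · subst h
              exact ⟨A, hAne, Function.update_self i₀ (indF A) f⟩
            · have hne' : (i : ℕ) ≠ m := fun hc => h (Fin.ext (by rw [hc, hval]))
              have : m + 1 ≤ (i : ℕ) := by omega
              obtain ⟨B, hB1, hB2⟩ := hind i this
              exact ⟨B, hB1, by rw [Function.update_of_ne h]; exact hB2⟩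
      · exact ih f h0 h1 hne
          (fun i hi => absurd hi
            (Nat.not_le.mpr (lt_of_lt_of_le i.isLt (Nat.le_of_not_lt hm))))

end ExpanderAux

open ExpanderAux in
/-- Lemma 3 (equivalent definitions of an ε-expander relation): the functional form with
maxima feasible for `[0,∞)`-valued functions, the `[0,1]`-valued functional form, and the
subset (Boolean) form are all equivalent. -/
theorem expanderRel_equivalent_definitions
    {S : Type*} [Fintype S] [Nonempty S] {r : ℕ}
    (R : Finset (Fin r → S)) (ε : ℝ) :
    ((∀ f : Fin r → S → ℝ, (∀ i x, 0 ≤ f i x) → (∀ i, ∃ x, f i x ≠ 0) →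
        |relApply R f - (R.card : ℝ) * (∏ i, ∑ x, |f i x|) / (Fintype.card S : ℝ) ^ r|
          < ε * R.card * ∏ i, ⨆ x, f i x) ↔ IsExpanderRel ε R) ∧
    ((∀ f : Fin r → S → ℝ, (∀ i x, 0 ≤ f i x) → (∀ i x, f i x ≤ 1) →
        (∀ i, ∃ x, f i x ≠ 0) →
        |relApply R f - (R.card : ℝ) * (∏ i, ∑ x, |f i x|) / (Fintype.card S : ℝ) ^ r|
          < ε * R.card) ↔ IsExpanderRel ε R) := by
  have habs : ∀ (f : Fin r → S → ℝ), (∀ i x, 0 ≤ f i x) →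
      (∏ i, ∑ x, |f i x|) = ∏ i, ∑ x, f i x := by
    intro f h0
    exact Finset.prod_congr rfl fun i _ =>
      Finset.sum_congr rfl fun x _ => abs_of_nonneg (h0 i x)
  -- From the subset form, the crucial bound for [0,1]-valued functions.
  have hCtoB : IsExpanderRel ε R → ∀ f : Fin r → S → ℝ, (∀ i x, 0 ≤ f i x) →
      (∀ i x, f i x ≤ 1) → (∀ i, ∃ x, f i x ≠ 0) →
      |relApply R f - (R.card : ℝ) * (∏ i, ∑ x, |f i x|) / (Fintype.card S : ℝ) ^ r|
        < ε * R.card := by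
    intro hC f h0 h1 hne
    rw [habs f h0]
    have h := ExpanderAux.mainB R ε hC f h0 h1 hne
    unfold ExpanderAux.errE at h
    exact h
  -- From the [0,1]-form to the subset form.
  have hBtoC : (∀ f : Fin r → S → ℝ, (∀ i x, 0 ≤ f i x) → (∀ i x, f i x ≤ 1) →
      (∀ i, ∃ x, f i x ≠ 0) →
      |relApply R f - (R.card : ℝ) * (∏ i, ∑ x, |f i x|) / (Fintype.card S : ℝ) ^ r|
        < ε * R.card) → IsExpanderRel ε R := by
    intro hB T
    have hK : 0 < ε * R.card := by
      have h := hB (fun _ _ => 1) (fun _ _ => zero_le_one) (fun _ _ => le_refl 1)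
        (fun _ => ⟨Classical.arbitrary S, one_ne_zero⟩)
      exact (abs_nonneg _).trans_lt h
    by_cases hT : ∀ i, (T i).Nonempty
    · have h := hB (fun i => indF (T i)) (fun i x => indF_nonneg _ _)
        (fun i x => indF_le_one _ _)
        (fun i => by
          obtain ⟨a, ha⟩ := hT i
          exact ⟨a, by simp [indF, ha]⟩)
      rw [habs _ (fun i x => indF_nonneg _ _)] at h
      have he : relApply R (fun i => indF (T i))
            - (R.card : ℝ) * (∏ i, ∑ x, indF (T i) x) / (Fintype.card S : ℝ) ^ r
          = relCount R T - (R.card : ℝ) * (∏ i, ((T i).card : ℝ))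
              / (Fintype.card S : ℝ) ^ r := by
        have h2 := errE_indF R T
        unfold ExpanderAux.errE at h2
        exact h2
      rwa [he] at h
    · push_neg at hT
      obtain ⟨i, hi⟩ := hT
      have h1 : relCount R T = 0 := by
        unfold relCount
        rw [Finset.filter_false_of_mem, Finset.card_empty, Nat.cast_zero]
        intro t _ h
        have hmem := h i
        rw [hi] at hmem
        exact absurd hmem (Finset.notMem_empty _)
      have h2 : (∏ j, ((T j).card : ℝ)) = 0 :=
        Finset.prod_eq_zero (mem_univ i) (by rw [hi]; simp)
      rw [h1, h2]
      simpa using hK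
  constructor
  · constructor
    · -- A → C
      intro hA T
      apply hBtoC
      intro f h0 h1 hne
      have h := hA f h0 hne
      have hsup : (∏ i, ⨆ x, f i x) ≤ 1 := by
        apply Finset.prod_le_one
        · intro i _
          rw [ciSup_eq_sup' (f i)]
          obtain ⟨x, hx⟩ := hne i
          exact le_trans (lt_of_le_of_ne (h0 i x) (Ne.symm hx)).le
            (Finset.le_sup' _ (mem_univ x))
        · intro i _
          rw [ciSup_eq_sup' (f i)]
          exact Finset.sup'_le _ _ fun x _ => h1 i x
      have hK : 0 < ε * R.card := by
        have h' := hA (fun _ _ => 1) (fun _ _ => zero_le_one)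
          (fun _ => ⟨Classical.arbitrary S, one_ne_zero⟩)
        have hone : (∏ i : Fin r, ⨆ x : S, (1:ℝ)) = 1 :=
          Finset.prod_eq_one fun i _ => ciSup_const
        rw [hone, mul_one] at h'
        exact (abs_nonneg _).trans_lt h'
      calc |relApply R f - (R.card : ℝ) * (∏ i, ∑ x, |f i x|) / (Fintype.card S : ℝ) ^ r|
          < ε * R.card * ∏ i, ⨆ x, f i x := h
        _ ≤ ε * R.card := mul_le_of_le_one_right hK.le hsup
    · -- C → A
      intro hC f h0 hne
      have hK : 0 < ε * R.card := (abs_nonneg _).trans_lt (hC fun _ => ∅)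
      set M : Fin r → ℝ := fun i => univ.sup' univ_nonempty (f i) with hM
      have hM0 : ∀ i, 0 < M i := fun i => by
        obtain ⟨x, hx⟩ := hne i
        exact lt_of_lt_of_le (lt_of_le_of_ne (h0 i x) (Ne.symm hx))
          (Finset.le_sup' _ (mem_univ x))
      set g : Fin r → S → ℝ := fun i x => f i x / M i with hg
      have hfg : f = fun i x => M i * g i x := by
        funext i x
        show f i x = M i * (f i x / M i)
        field_simp
        rw [mul_div_cancel_right₀ (f i x) (hM0 i).ne']
      have hg0 : ∀ i x, 0 ≤ g i x := fun i x => div_nonneg (h0 i x) (hM0 i).le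
      have hg1 : ∀ i x, g i x ≤ 1 := fun i x =>
        (div_le_one (hM0 i)).mpr (Finset.le_sup' _ (mem_univ x))
      have hgne : ∀ i, ∃ x, g i x ≠ 0 := fun i => by
        obtain ⟨x, hx⟩ := hne i
        exact ⟨x, div_ne_zero hx (hM0 i).ne'⟩
      have hmain := ExpanderAux.mainB R ε hC g hg0 hg1 hgne
      have hEf : ExpanderAux.errE R f = (∏ i, M i) * ExpanderAux.errE R g := by
        conv_lhs => rw [hfg]
        exact errE_smul R M g
      have hprod : 0 < ∏ i, M i := Finset.prod_pos fun i _ => hM0 i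
      rw [habs f h0]
      have hsup : (∏ i, ⨆ x, f i x) = ∏ i, M i :=
        Finset.prod_congr rfl fun i _ => ciSup_eq_sup' (f i)
      have hgoal : |ExpanderAux.errE R f| < ε * ↑R.card * ∏ i, ⨆ x, f i x := by
        rw [hsup, hEf, abs_mul, abs_of_nonneg hprod.le, mul_comm (ε * (R.card : ℝ))]
        exact (mul_lt_mul_iff_right₀ hprod).mpr hmain
      unfold ExpanderAux.errE at hgoal
      exact hgoal
  · exact ⟨hBtoC, hCtoB⟩
end

section
/- Let G = (V,E) be a simple undirected d-regular graph with second eigenvalue λ (in absolute value), and let k ≥ 2. Define the k-ary relation R_k ⊆ V^k by R_k = {(a₁,…,a_k) : (aᵢ, a_{i+1}) is an edge of G for all 1 ≤ i ≤ k−1}. Then R_k is a (k−1)·(|λ|/d)-expander relation, i.e. for all subsets S₁,…,S_k ⊆ V, |R_k(S₁,…,S_k) − |R_k|·∏_{i=1}^k |Sᵢ|/|V|^k| < (k−1)·(|λ|/d)·|R_k|. -/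
open Finset

attribute [local instance] Classical.propDecidable

/-- `E(A,B)`: number of ordered pairs `(a,b) ∈ A × B` with `a` adjacent to `b`. -/
noncomputable def edgeCount {V : Type*} (G : SimpleGraph V) (A B : Finset V) : ℕ :=
  ((A ×ˢ B).filter fun p => G.Adj p.1 p.2).card

/-- `R_k`: the `k`-ary relation of walks of length `k-1` in `G`
(consecutive coordinates adjacent). -/
noncomputable def walkRel {V : Type*} [Fintype V] (G : SimpleGraph V) (k : ℕ) :
    Finset (Fin k → V) :=
  Finset.univ.filter fun t =>
    ∀ i : Fin k, ∀ h : (i : ℕ) + 1 < k, G.Adj (t i) (t ⟨(i : ℕ) + 1, h⟩)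

noncomputable def FbN {V : Type*} (G : SimpleGraph V) : ℕ → (ℕ → Finset V) → V → ℕ
  | 0, _, _ => 1
  | (m+1), Tn, v => ∑ u ∈ Tn 0, if G.Adj v u then FbN G m (fun i => Tn (i+1)) u else 0

noncomputable def Tex {V : Type*} [Fintype V] {r : ℕ} (T : Fin r → Finset V) : ℕ → Finset V :=
  fun j => if h : j < r then T ⟨j, h⟩ else Finset.univ

lemma FbN_le {V : Type*} [Fintype V] (G : SimpleGraph V) {d : ℕ}
    (hreg : G.IsRegularOfDegree d) :
    ∀ (m : ℕ) (Tn : ℕ → Finset V) (v : V), FbN G m Tn v ≤ d ^ m := by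
  intro m
  induction m with
  | zero => intro Tn v; simp [FbN]
  | succ m ih =>
    intro Tn v
    have h1 : FbN G (m+1) Tn v ≤ ∑ u ∈ Finset.univ, if G.Adj v u then d ^ m else 0 := by
      rw [show FbN G (m+1) Tn v = ∑ u ∈ Tn 0, if G.Adj v u then FbN G m (fun i => Tn (i+1)) u else 0 from rfl]
      refine le_trans (Finset.sum_le_sum (fun u _ => ?_)) (Finset.sum_le_sum_of_subset (Finset.subset_univ _))
      split <;> simp [ih]
    refine h1.trans ?_
    rw [← Finset.sum_filter]
    simp only [Finset.sum_const, smul_eq_mul]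
    have : (Finset.univ.filter fun u => G.Adj v u) = G.neighborFinset v := by
      ext u; simp [SimpleGraph.neighborFinset]
    rw [this]
    have := hreg v
    rw [show (G.neighborFinset v).card = G.degree v from rfl, this]
    rw [pow_succ]; ring_nf; omega

lemma FbN_univ {V : Type*} [Fintype V] (G : SimpleGraph V) {d : ℕ}
    (hreg : G.IsRegularOfDegree d) :
    ∀ (m : ℕ) (v : V), FbN G m (fun _ => Finset.univ) v = d ^ m := by
  intro m
  induction m with
  | zero => intro v; simp [FbN]
  | succ m ih =>
    intro v
    rw [show FbN G (m+1) (fun _ => Finset.univ) v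
        = ∑ u ∈ Finset.univ, if G.Adj v u then FbN G m (fun _ => Finset.univ) u else 0 from rfl]
    simp only [ih]
    rw [← Finset.sum_filter]
    simp only [Finset.sum_const, smul_eq_mul]
    have : (Finset.univ.filter fun u => G.Adj v u) = G.neighborFinset v := by
      ext u; simp [SimpleGraph.neighborFinset]
    rw [this, show (G.neighborFinset v).card = G.degree v from rfl, hreg v, pow_succ]
    ring

noncomputable def walkSetFrom {V : Type*} [Fintype V] (G : SimpleGraph V) (m : ℕ)
    (Tn : ℕ → Finset V) (v : V) : Finset (Fin (m+1) → V) :=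
  Finset.univ.filter fun t =>
    (∀ i : Fin (m+1), ∀ h : (i:ℕ)+1 < m+1, G.Adj (t i) (t ⟨(i:ℕ)+1, h⟩)) ∧
    t 0 = v ∧ ∀ i : Fin (m+1), (i:ℕ) ≠ 0 → t i ∈ Tn ((i:ℕ)-1)

lemma cons_mk_succ {V : Type*} {n : ℕ} (v : V) (s : Fin n → V) (j : ℕ) (h : j+1 < n+1) :
    (Fin.cons v s : Fin (n+1) → V) ⟨j+1, h⟩ = s ⟨j, Nat.lt_of_succ_lt_succ h⟩ := by
  have e : (⟨j+1, h⟩ : Fin (n+1)) = Fin.succ ⟨j, Nat.lt_of_succ_lt_succ h⟩ := Fin.ext rfl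
  rw [e, Fin.cons_succ]

lemma card_walkSetFrom {V : Type*} [Fintype V] (G : SimpleGraph V) :
    ∀ (m : ℕ) (Tn : ℕ → Finset V) (v : V),
      (walkSetFrom G m Tn v).card = FbN G m Tn v := by
  intro m
  induction m with
  | zero =>
    intro Tn v
    rw [show FbN G 0 Tn v = 1 from rfl, Finset.card_eq_one]
    refine ⟨fun _ => v, ?_⟩
    ext t
    simp only [walkSetFrom, Finset.mem_filter, Finset.mem_univ, true_and, Finset.mem_singleton]
    constructor
    · rintro ⟨-, h0, -⟩
      funext i
      have hi0 : i = 0 := Fin.ext (by have := i.isLt; omega)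
      rw [hi0, h0]
    · rintro rfl
      refine ⟨fun i h => absurd h (by omega), rfl, fun i h => ?_⟩
      exact absurd (by have := i.isLt; omega : (i:ℕ) = 0) h
  | succ m ih =>
    intro Tn v
    rw [show FbN G (m+1) Tn v
        = ∑ u ∈ Tn 0, if G.Adj v u then FbN G m (fun i => Tn (i+1)) u else 0 from rfl]
    have hone : (1:ℕ) < m + 1 + 1 := by omega
    rw [Finset.card_eq_sum_card_fiberwise
      (f := fun t : Fin (m+2) → V => t ⟨1, hone⟩) (t := Finset.univ)
      (fun t _ => Finset.mem_univ _)]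
    have key : ∀ u : V,
        ((walkSetFrom G (m+1) Tn v).filter fun t => t ⟨1, hone⟩ = u).card
        = if u ∈ Tn 0 ∧ G.Adj v u then FbN G m (fun i => Tn (i+1)) u else 0 := by
      intro u
      by_cases hc : u ∈ Tn 0 ∧ G.Adj v u
      · rw [if_pos hc, ← ih (fun i => Tn (i+1)) u]
        refine Finset.card_bij' (fun t _ => Fin.tail t) (fun s _ => Fin.cons v s)
          ?hi ?hj ?linv ?rinv
        case hi =>
          intro t ht
          simp only [Finset.mem_filter, walkSetFrom, Finset.mem_univ, true_and] at ht
          obtain ⟨⟨hadj, h0, hcon⟩, h1⟩ := ht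
          simp only [walkSetFrom, Finset.mem_filter, Finset.mem_univ, true_and]
          refine ⟨?_, ?_, ?_⟩
          · intro i h
            have hlt : (i:ℕ)+1+1 < m+1+1 := by omega
            have := hadj ⟨(i:ℕ)+1, by omega⟩ hlt
            show G.Adj (t (Fin.succ i)) (t (Fin.succ ⟨(i:ℕ)+1, h⟩))
            convert this using 2 <;> exact Fin.ext (by simp)
          · show t (Fin.succ 0) = u
            have e : (Fin.succ 0 : Fin (m+2)) = ⟨1, hone⟩ := Fin.ext (by simp)
            rw [e, h1]
          · intro i hi
            have hne : (i:ℕ)+1 ≠ 0 := by omega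
            have := hcon ⟨(i:ℕ)+1, by omega⟩ hne
            have e1 : (i:ℕ)+1-1 = (i:ℕ) := rfl
            rw [e1] at this
            have e2 : (i:ℕ)-1+1 = (i:ℕ) := by omega
            rw [e2]
            exact this
        case hj =>
          intro s hs
          simp only [walkSetFrom, Finset.mem_filter, Finset.mem_univ, true_and] at hs
          obtain ⟨hadj, h0, hcon⟩ := hs
          simp only [Finset.mem_filter, walkSetFrom, Finset.mem_univ, true_and]
          refine ⟨⟨?_, ?_, ?_⟩, ?_⟩
          · intro i
            induction i using Fin.cases with
            | zero =>
              intro h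
              have e : (⟨(0:Fin (m+2))+1, h⟩ : Fin (m+2)) = Fin.succ 0 := Fin.ext (by simp)
              rw [Fin.cons_zero, e, Fin.cons_succ]
              rw [show (0 : Fin (m+1)) = 0 from rfl, h0]
              exact hc.2
            | succ j =>
              intro h
              have hlt : (j:ℕ)+1 < m+1 := by
                simp only [Fin.val_succ] at h; omega
              have e : (⟨(j.succ : ℕ)+1, h⟩ : Fin (m+2)) = Fin.succ ⟨(j:ℕ)+1, hlt⟩ :=
                Fin.ext (by simp)
              rw [e, Fin.cons_succ, Fin.cons_succ]
              exact hadj j hlt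
          · simp
          · intro i
            induction i using Fin.cases with
            | zero => intro h; exact (h (by simp)).elim
            | succ j =>
              intro _
              rw [Fin.cons_succ]
              have ev : (j.succ : ℕ) - 1 = (j : ℕ) := by simp
              rw [ev]
              by_cases hj : (j:ℕ) = 0
              · have hj0 : j = 0 := Fin.ext (by simpa using hj)
                rw [hj0]
                simpa [h0] using hc.1
              · have := hcon j hj
                have e2 : (j:ℕ) - 1 + 1 = (j:ℕ) := by omega
                rw [e2] at this
                exact this
          · have e : (⟨1, hone⟩ : Fin (m+2)) = Fin.succ 0 := Fin.ext (by simp)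
            rw [e, Fin.cons_succ]
            exact h0
        case linv =>
          intro t ht
          simp only [Finset.mem_filter, walkSetFrom, Finset.mem_univ, true_and] at ht
          show Fin.cons v (Fin.tail t) = t
          conv_rhs => rw [← Fin.cons_self_tail t]
          rw [ht.1.2.1]
        case rinv =>
          intro s _
          simp
      · rw [if_neg hc, Finset.card_eq_zero, Finset.eq_empty_iff_forall_notMem]
        intro t ht
        simp only [Finset.mem_filter, walkSetFrom, Finset.mem_univ, true_and] at ht
        obtain ⟨⟨hadj, h0, hcon⟩, h1⟩ := ht
        apply hc
        constructor
        · have := hcon ⟨1, hone⟩ (show (1:ℕ) ≠ 0 by omega)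
          rw [h1] at this; simpa using this
        · have h2 := hadj ⟨0, by omega⟩ (show (0:ℕ)+1 < m+1+1 by omega)
          have h2' : G.Adj (t 0) (t ⟨1, hone⟩) := by
            convert h2 using 2 <;> exact Fin.ext (by simp)
          rw [h0, h1] at h2'
          exact h2' 
    calc (∑ u ∈ Finset.univ, ((walkSetFrom G (m+1) Tn v).filter fun t => t ⟨1, hone⟩ = u).card)
        = ∑ u ∈ Finset.univ, if u ∈ Tn 0 ∧ G.Adj v u then FbN G m (fun i => Tn (i+1)) u else 0 :=
          Finset.sum_congr rfl (fun u _ => key u)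
      _ = ∑ u ∈ Tn 0, if G.Adj v u then FbN G m (fun i => Tn (i+1)) u else 0 := by
          simp only [ite_and]
          rw [Finset.sum_ite_mem, Finset.univ_inter]

lemma Tex_coe {V : Type*} [Fintype V] {r : ℕ} (T : Fin r → Finset V) (i : Fin r) :
    Tex T (i : ℕ) = T i := by
  simp only [Tex, dif_pos i.isLt]

lemma count_walkRel {V : Type*} [Fintype V] (G : SimpleGraph V) (m : ℕ)
    (T : Fin (m+1) → Finset V) :
    ((walkRel G (m+1)).filter fun t => ∀ i, t i ∈ T i).card
      = ∑ v ∈ T 0, FbN G m (fun j => Tex T (j+1)) v := by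
  have hfil : ((walkRel G (m+1)).filter fun t => ∀ i, t i ∈ T i)
      = Finset.univ.filter fun t : Fin (m+1) → V =>
        (∀ i : Fin (m+1), ∀ h : (i:ℕ)+1 < m+1, G.Adj (t i) (t ⟨(i:ℕ)+1, h⟩)) ∧
        ∀ i, t i ∈ T i := by
    rw [walkRel, Finset.filter_filter]
  rw [hfil]
  rw [Finset.card_eq_sum_card_fiberwise (f := fun t : Fin (m+1) → V => t 0) (t := T 0)
    (fun t ht => by simp only [Finset.mem_coe, Finset.mem_filter] at ht; exact ht.2.2 0)]
  refine Finset.sum_congr rfl (fun v hv => ?_)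
  rw [← card_walkSetFrom G m (fun j => Tex T (j+1)) v]
  congr 1
  rw [Finset.filter_filter]
  apply Finset.filter_congr
  intro t _
  constructor
  · rintro ⟨⟨hadj, hall⟩, h0⟩
    refine ⟨hadj, h0, fun i hi => ?_⟩
    have e : (i:ℕ) - 1 + 1 = (i:ℕ) := by omega
    show t i ∈ Tex T ((i:ℕ) - 1 + 1)
    rw [e, Tex_coe]
    exact hall i
  · rintro ⟨hadj, h0, hcon⟩
    refine ⟨⟨hadj, fun i => ?_⟩, h0⟩
    by_cases hi : (i:ℕ) = 0
    · have : i = 0 := Fin.ext (by simpa using hi)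
      rw [this, h0]; exact hv
    · have h2 : t i ∈ Tex T ((i:ℕ) - 1 + 1) := hcon i hi
      have e : (i:ℕ) - 1 + 1 = (i:ℕ) := by omega
      rw [e, Tex_coe] at h2
      exact h2

lemma edgeCount_eq_sum {V : Type*} [Fintype V] (G : SimpleGraph V) (A B : Finset V) :
    edgeCount G A B = ∑ u ∈ A, (B.filter fun x => G.Adj u x).card := by
  rw [edgeCount,
    Finset.card_eq_sum_card_fiberwise (f := fun p : V × V => p.1) (t := A)
      (fun p hp => by simp only [Finset.mem_coe, Finset.mem_filter, Finset.mem_product] at hp; exact hp.1.1)]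
  refine Finset.sum_congr rfl (fun u hu => ?_)
  refine Finset.card_nbij' (fun p => p.2) (fun x => (u, x)) ?_ ?_ ?_ ?_
  · intro p hp
    simp only [Finset.mem_coe, Finset.mem_filter, Finset.mem_product] at hp ⊢
    obtain ⟨⟨⟨-, hB⟩, hadj⟩, h1⟩ := hp
    exact ⟨hB, h1 ▸ hadj⟩
  · intro x hx
    simp only [Finset.mem_coe, Finset.mem_filter, Finset.mem_product] at hx ⊢
    exact ⟨⟨⟨hu, hx.1⟩, hx.2⟩, trivial⟩
  · intro p hp
    simp only [Finset.mem_coe, Finset.mem_filter] at hp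
    rw [← hp.2]
  · intro x _
    rfl

lemma layer_cake {V : Type*} [Fintype V] (A : Finset V) (c : V → ℕ) (M : ℕ)
    (hc : ∀ u, c u ≤ M) (x : V → ℝ) :
    ∑ u ∈ A, (c u : ℝ) * x u
      = ∑ m ∈ Finset.Icc 1 M, ∑ u ∈ A.filter (fun u => m ≤ c u), x u := by
  have : ∀ m, ∑ u ∈ A.filter (fun u => m ≤ c u), x u
      = ∑ u ∈ A, if m ≤ c u then x u else 0 := fun m => Finset.sum_filter _ _
  simp only [this]
  rw [Finset.sum_comm]
  refine Finset.sum_congr rfl (fun u _ => ?_)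
  rw [← Finset.sum_filter]
  have hfe : (Finset.Icc 1 M).filter (fun m => m ≤ c u) = Finset.Icc 1 (c u) := by
    ext m
    simp only [Finset.mem_filter, Finset.mem_Icc]
    have := hc u
    omega
  rw [hfe, Finset.sum_const, Nat.card_Icc]
  simp [mul_comm]

noncomputable def aSeq {V : Type*} [Fintype V] (G : SimpleGraph V) (K : ℕ)
    (Tn : ℕ → Finset V) (j : ℕ) : ℕ :=
  ∑ v ∈ Tn j, FbN G (K+1-j) (fun i => Tn (j+1+i)) v

lemma aSeq_rec {V : Type*} [Fintype V] (G : SimpleGraph V) (K : ℕ) (Tn : ℕ → Finset V)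
    {j : ℕ} (hj : j ≤ K) :
    aSeq G K Tn j = ∑ u ∈ Tn (j+1),
      FbN G (K-j) (fun i => Tn (j+2+i)) u * ((Tn j).filter fun x => G.Adj x u).card := by
  rw [aSeq, show K+1-j = (K-j)+1 by omega]
  have unf : ∀ v, FbN G ((K-j)+1) (fun i => Tn (j+1+i)) v
      = ∑ u ∈ Tn (j+1), if G.Adj v u then FbN G (K-j) (fun i => Tn (j+2+i)) u else 0 := by
    intro v
    rw [show FbN G ((K-j)+1) (fun i => Tn (j+1+i)) v
        = ∑ u ∈ (fun i : ℕ => Tn (j+1+i)) 0,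
            if G.Adj v u then FbN G (K-j) (fun i => Tn (j+1+(i+1))) u else 0 from rfl]
    have e1 : (fun i => Tn (j+1+(i+1))) = fun i => Tn (j+2+i) :=
      funext fun i => congrArg Tn (by omega)
    have e0 : (fun i : ℕ => Tn (j+1+i)) 0 = Tn (j+1) := by norm_num
    rw [e1, e0]
  simp only [unf]
  rw [Finset.sum_comm]
  refine Finset.sum_congr rfl fun u _ => ?_
  rw [← Finset.sum_filter, Finset.sum_const, smul_eq_mul, mul_comm]

lemma aSeq_last {V : Type*} [Fintype V] (G : SimpleGraph V) (K : ℕ) (Tn : ℕ → Finset V) :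
    aSeq G K Tn (K+1) = (Tn (K+1)).card := by
  rw [aSeq, show K+1-(K+1) = 0 by omega]
  simp [FbN]

lemma relCount_eq_aSeq {V : Type*} [Fintype V] (G : SimpleGraph V) (K : ℕ)
    (T : Fin (K+2) → Finset V) :
    relCount (walkRel G (K+2)) T = (aSeq G K (Tex T) 0 : ℝ) := by
  have h1 := count_walkRel G (K+1) T
  have e1 : Tex T 0 = T 0 := by
    have h0 : ((0 : Fin (K+2)) : ℕ) = 0 := rfl
    rw [← h0, Tex_coe]
  have efun : (fun j => Tex T (j+1)) = (fun i : ℕ => Tex T (0+1+i)) := by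
    funext i
    have e : i + 1 = 0 + 1 + i := by rw [Nat.zero_add, Nat.add_comm]
    rw [e]
  have h2 : aSeq G K (Tex T) 0
      = ∑ v ∈ T 0, FbN G (K+1) (fun j => Tex T (j+1)) v := by
    rw [aSeq]
    exact Finset.sum_congr e1 fun v _ => (congrArg (fun f => FbN G (K+1-0) f v) efun).symm
  rw [relCount]
  norm_cast
  rw [h1, h2]

lemma card_walkRel {V : Type*} [Fintype V] (G : SimpleGraph V) {d : ℕ}
    (hreg : G.IsRegularOfDegree d) (K : ℕ) :
    (walkRel G (K+2)).card = Fintype.card V * d^(K+1) := by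
  have h1 := count_walkRel G (K+1) (fun _ => (Finset.univ : Finset V))
  have hfil : ((walkRel G (K+1+1)).filter
      (fun t => ∀ i : Fin (K+1+1), t i ∈ (fun _ : Fin (K+1+1) => (Finset.univ : Finset V)) i))
      = walkRel G (K+1+1) :=
    Finset.filter_true_of_mem (fun _ _ => fun i => Finset.mem_univ _)
  rw [hfil] at h1
  rw [show walkRel G (K+2) = walkRel G (K+1+1) from rfl, h1]
  have e : (fun j => Tex (fun _ : Fin (K+1+1) => (Finset.univ : Finset V)) (j+1))
      = fun _ : ℕ => (Finset.univ : Finset V) := by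
    funext j
    rw [Tex]
    split <;> rfl
  rw [e]
  simp [FbN_univ G hreg, Finset.sum_const, Finset.card_univ]

noncomputable def HSeq {V : Type*} [Fintype V] (G : SimpleGraph V) (d K : ℕ)
    (Tn : ℕ → Finset V) (j : ℕ) : ℝ :=
  (aSeq G K Tn j : ℝ) * (d:ℝ)^j
    * ∏ i ∈ Finset.range j, (((Tn i).card : ℝ) / (Fintype.card V : ℝ))

lemma HSeq_diff {V : Type*} [Fintype V] (G : SimpleGraph V) (d K : ℕ)
    (Tn : ℕ → Finset V) {j : ℕ} (hj : j ≤ K) :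
    HSeq G d K Tn j - HSeq G d K Tn (j+1)
      = (d:ℝ)^j * (∏ i ∈ Finset.range j, (((Tn i).card : ℝ) / (Fintype.card V : ℝ)))
        * (∑ u ∈ Tn (j+1), (FbN G (K-j) (fun i => Tn (j+2+i)) u : ℝ)
            * ((((Tn j).filter fun x => G.Adj x u).card : ℝ)
               - (d:ℝ) * ((Tn j).card:ℝ) / (Fintype.card V : ℝ))) := by
  have haj : (aSeq G K Tn j : ℝ) = ∑ u ∈ Tn (j+1),
      (FbN G (K-j) (fun i => Tn (j+2+i)) u : ℝ)
        * (((Tn j).filter fun x => G.Adj x u).card : ℝ) := by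
    rw [aSeq_rec G K Tn hj]
    push_cast
    rfl
  have haj1 : (aSeq G K Tn (j+1) : ℝ) = ∑ u ∈ Tn (j+1),
      (FbN G (K-j) (fun i => Tn (j+2+i)) u : ℝ) := by
    rw [aSeq, show K+1-(j+1) = K-j from by rw [Nat.succ_sub_succ]]
    have efun : (fun i : ℕ => Tn (j+1+1+i)) = fun i : ℕ => Tn (j+2+i) := rfl
    rw [efun]
    push_cast
    rfl
  have hsplit : ∑ u ∈ Tn (j+1), (FbN G (K-j) (fun i => Tn (j+2+i)) u : ℝ)
      * ((((Tn j).filter fun x => G.Adj x u).card : ℝ)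
         - (d:ℝ) * ((Tn j).card:ℝ) / (Fintype.card V : ℝ))
      = (∑ u ∈ Tn (j+1), (FbN G (K-j) (fun i => Tn (j+2+i)) u : ℝ)
          * (((Tn j).filter fun x => G.Adj x u).card : ℝ))
        - (∑ u ∈ Tn (j+1), (FbN G (K-j) (fun i => Tn (j+2+i)) u : ℝ))
          * ((d:ℝ) * ((Tn j).card:ℝ) / (Fintype.card V : ℝ)) := by
    rw [Finset.sum_mul, ← Finset.sum_sub_distrib]
    exact Finset.sum_congr rfl fun u _ => by ring
  rw [hsplit, ← haj, ← haj1, HSeq, HSeq, Finset.prod_range_succ]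
  ring

lemma D_lt {V : Type*} [Fintype V] [Nonempty V] (G : SimpleGraph V) (d : ℕ) (hd : 0 < d)
    (hreg : G.IsRegularOfDegree d) (lam : ℝ) (hlam : 0 < lam)
    (hmix : ∀ A B : Finset V,
      |(edgeCount G A B : ℝ) - (d : ℝ) * A.card * B.card / (Fintype.card V : ℝ)| ≤
        lam * Real.sqrt ((A.card : ℝ) * B.card))
    (A B : Finset V) (c : V → ℕ) (M : ℕ) (hM : 0 < M) (hc : ∀ u, c u ≤ M) :
    |∑ u ∈ A, (c u : ℝ) * (((B.filter fun x => G.Adj x u).card : ℝ)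
        - (d:ℝ) * (B.card:ℝ) / (Fintype.card V : ℝ))|
      < (M:ℝ) * lam * (Fintype.card V : ℝ) := by
  have hn0 : 0 < Fintype.card V := Fintype.card_pos
  have hnR : (0:ℝ) < (Fintype.card V:ℝ) := by exact_mod_cast hn0
  have hMR : (0:ℝ) < (M:ℝ) := by exact_mod_cast hM
  have hposRHS : 0 < (M:ℝ) * lam * (Fintype.card V : ℝ) := by positivity
  by_cases hB : B = Finset.univ
  · have hzero : ∀ u ∈ A, (c u : ℝ) * (((B.filter fun x => G.Adj x u).card : ℝ)
        - (d:ℝ) * (B.card:ℝ) / (Fintype.card V : ℝ)) = 0 := by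
      intro u _
      have h1 : (B.filter fun x => G.Adj x u) = G.neighborFinset u := by
        rw [hB]; ext x
        simp [SimpleGraph.mem_neighborFinset, G.adj_comm]
      have h2 : ((B.filter fun x => G.Adj x u).card : ℝ) = d := by
        rw [h1]
        exact_mod_cast congrArg Nat.cast (hreg u)
      have h3 : (B.card : ℝ) = (Fintype.card V : ℝ) := by rw [hB]; simp
      rw [h2, h3, mul_div_assoc, div_self hnR.ne', mul_one, sub_self, mul_zero]
    rw [Finset.sum_eq_zero hzero, abs_zero]
    exact hposRHS
  · have hBlt : (B.card : ℝ) < (Fintype.card V : ℝ) := by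
      have h4 := Finset.card_lt_card ((Finset.subset_univ B).ssubset_of_ne hB)
      rw [Finset.card_univ] at h4
      exact_mod_cast h4
    have hBnn : (0:ℝ) ≤ (B.card:ℝ) := by positivity
    have hsq : Real.sqrt ((Fintype.card V : ℝ) * (B.card:ℝ)) < (Fintype.card V : ℝ) := by
      have h1 : (Fintype.card V:ℝ) * (B.card:ℝ) < (Fintype.card V:ℝ) * (Fintype.card V:ℝ) :=
        mul_lt_mul_of_pos_left hBlt hnR
      calc Real.sqrt ((Fintype.card V : ℝ) * (B.card:ℝ))
          < Real.sqrt ((Fintype.card V:ℝ) * (Fintype.card V:ℝ)) :=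
            Real.sqrt_lt_sqrt (by positivity) h1
        _ = (Fintype.card V:ℝ) := Real.sqrt_mul_self hnR.le
    rw [layer_cake A c M hc]
    have hinner : ∀ m ∈ Finset.Icc 1 M,
        |∑ u ∈ A.filter (fun u => m ≤ c u), (((B.filter fun x => G.Adj x u).card : ℝ)
          - (d:ℝ) * (B.card:ℝ) / (Fintype.card V : ℝ))|
        ≤ lam * Real.sqrt ((Fintype.card V : ℝ) * (B.card:ℝ)) := by
      intro m _
      have hsum : ∑ u ∈ A.filter (fun u => m ≤ c u), (((B.filter fun x => G.Adj x u).card : ℝ)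
          - (d:ℝ) * (B.card:ℝ) / (Fintype.card V : ℝ))
          = (edgeCount G (A.filter (fun u => m ≤ c u)) B : ℝ)
            - (d:ℝ) * ((A.filter (fun u => m ≤ c u)).card : ℝ) * (B.card:ℝ)
              / (Fintype.card V : ℝ) := by
        rw [Finset.sum_sub_distrib, Finset.sum_const, nsmul_eq_mul]
        congr 1
        · rw [edgeCount_eq_sum]
          push_cast
          refine Finset.sum_congr rfl fun u _ => ?_
          norm_cast
          congr 1
          apply Finset.filter_congr
          intro x _
          exact ⟨fun h => h.symm, fun h => h.symm⟩
        · ring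
      rw [hsum]
      refine (hmix _ B).trans ?_
      have hsqle : Real.sqrt (((A.filter fun u => m ≤ c u).card : ℝ) * (B.card:ℝ))
          ≤ Real.sqrt ((Fintype.card V:ℝ) * (B.card:ℝ)) := by
        apply Real.sqrt_le_sqrt
        apply mul_le_mul_of_nonneg_right _ hBnn
        exact_mod_cast Finset.card_le_univ _
      exact mul_le_mul_of_nonneg_left hsqle hlam.le
    calc |∑ m ∈ Finset.Icc 1 M, ∑ u ∈ A.filter (fun u => m ≤ c u),
            (((B.filter fun x => G.Adj x u).card : ℝ)
              - (d:ℝ) * (B.card:ℝ) / (Fintype.card V : ℝ))|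
        ≤ ∑ m ∈ Finset.Icc 1 M, |∑ u ∈ A.filter (fun u => m ≤ c u),
            (((B.filter fun x => G.Adj x u).card : ℝ)
              - (d:ℝ) * (B.card:ℝ) / (Fintype.card V : ℝ))| :=
          Finset.abs_sum_le_sum_abs _ _
      _ ≤ (Finset.Icc 1 M).card • (lam * Real.sqrt ((Fintype.card V : ℝ) * (B.card:ℝ))) :=
          Finset.sum_le_card_nsmul _ _ _ hinner
      _ = (M:ℝ) * (lam * Real.sqrt ((Fintype.card V : ℝ) * (B.card:ℝ))) := by
          rw [Nat.card_Icc, nsmul_eq_mul]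
          norm_num
      _ < (M:ℝ) * lam * (Fintype.card V:ℝ) := by
          rw [mul_assoc (M:ℝ) lam]
          exact mul_lt_mul_of_pos_left (mul_lt_mul_of_pos_left hsq hlam) hMR

/-- For a `d`-regular graph satisfying the Expander Mixing Lemma with eigenvalue bound `λ`
and `k ≥ 2`, the relation `R_k` of walks of length `k-1` is a `(k-1)·(|λ|/d)`-expander
relation. -/
theorem walkRel_isExpanderRel
    {V : Type*} [Fintype V] [Nonempty V]
    (G : SimpleGraph V) (d : ℕ) (hd : 0 < d) (hreg : G.IsRegularOfDegree d)
    (lam : ℝ) (hlam : 0 < lam)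
    (hmix : ∀ A B : Finset V,
      |(edgeCount G A B : ℝ) - (d : ℝ) * A.card * B.card / (Fintype.card V : ℝ)| ≤
        lam * Real.sqrt ((A.card : ℝ) * B.card))
    (k : ℕ) (hk : 2 ≤ k) :
    IsExpanderRel (((k : ℝ) - 1) * (lam / d)) (walkRel G k) := by
  obtain ⟨K, rfl⟩ : ∃ K, k = K + 2 := ⟨k - 2, by omega⟩
  intro T
  have hn0 : 0 < Fintype.card V := Fintype.card_pos
  have hnR : (0:ℝ) < (Fintype.card V : ℝ) := by exact_mod_cast hn0
  have hdR : (0:ℝ) < (d : ℝ) := by exact_mod_cast hd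
  set Tn : ℕ → Finset V := Tex T with hTn
  have hcard : ((walkRel G (K+2)).card : ℝ) = (Fintype.card V : ℝ) * (d:ℝ)^(K+1) := by
    rw [card_walkRel G hreg K]
    push_cast
    ring
  have hH0 : relCount (walkRel G (K+2)) T = HSeq G d K Tn 0 := by
    rw [relCount_eq_aSeq G K T, HSeq]
    simp
    rfl
  have hHlast : HSeq G d K Tn (K+1)
      = ((walkRel G (K+2)).card : ℝ) * (∏ i, ((T i).card : ℝ)) / (Fintype.card V : ℝ)^(K+2) := by
    have hprod : (∏ i : Fin (K+2), ((T i).card : ℝ))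
        = ∏ i ∈ Finset.range (K+2), ((Tn i).card : ℝ) := by
      rw [← Fin.prod_univ_eq_prod_range (fun i => ((Tn i).card : ℝ)) (K+2)]
      refine Finset.prod_congr rfl fun i _ => ?_
      rw [hTn, Tex_coe]
    have hprod2 : (∏ i ∈ Finset.range (K+2), ((Tn i).card : ℝ))
        = (∏ i ∈ Finset.range (K+1), ((Tn i).card : ℝ)) * ((Tn (K+1)).card : ℝ) := by
      rw [show K+2 = (K+1)+1 from rfl, Finset.prod_range_succ]
    rw [HSeq, aSeq_last G K Tn, hcard, hprod, hprod2,
      Finset.prod_div_distrib, Finset.prod_const, Finset.card_range]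
    rw [pow_succ (Fintype.card V : ℝ) (K+1)]
    have key : ∀ (A P n D : ℝ), n ≠ 0 →
        A * D * (P / n^(K+1)) = n * D * (P * A) / (n^(K+1) * n) := by
      intro A P n D hn
      have h1 : n * n⁻¹ = 1 := mul_inv_cancel₀ hn
      linear_combination (-(A * D * P * (n^(K+1))⁻¹)) * h1
    exact key _ _ _ _ hnR.ne'
  have hstep : ∀ j ∈ Finset.range (K+1),
      |HSeq G d K Tn j - HSeq G d K Tn (j+1)| < lam * (d:ℝ)^K * (Fintype.card V : ℝ) := by
    intro j hjmem
    have hjK : j ≤ K := by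
      rw [Finset.mem_range] at hjmem
      omega
    rw [HSeq_diff G d K Tn hjK]
    have hDlt := D_lt G d hd hreg lam hlam hmix (Tn (j+1)) (Tn j)
      (fun u => FbN G (K-j) (fun i => Tn (j+2+i)) u) (d^(K-j))
      (pow_pos hd _) (fun u => FbN_le G hreg (K-j) _ u)
    have hProdle : (∏ i ∈ Finset.range j, (((Tn i).card : ℝ) / (Fintype.card V : ℝ))) ≤ 1 := by
      apply Finset.prod_le_one
      · intro i _; positivity
      · intro i _
        rw [div_le_one hnR]
        exact_mod_cast Finset.card_le_univ _
    have hProdnn : (0:ℝ) ≤ ∏ i ∈ Finset.range j, (((Tn i).card : ℝ) / (Fintype.card V : ℝ)) := by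
      apply Finset.prod_nonneg
      intro i _; positivity
    calc |(d:ℝ)^j * (∏ i ∈ Finset.range j, (((Tn i).card : ℝ) / (Fintype.card V : ℝ)))
            * (∑ u ∈ Tn (j+1), (FbN G (K-j) (fun i => Tn (j+2+i)) u : ℝ)
              * ((((Tn j).filter fun x => G.Adj x u).card : ℝ)
                - (d:ℝ) * ((Tn j).card:ℝ) / (Fintype.card V : ℝ)))|
        = (d:ℝ)^j * (∏ i ∈ Finset.range j, (((Tn i).card : ℝ) / (Fintype.card V : ℝ)))
            * |∑ u ∈ Tn (j+1), (FbN G (K-j) (fun i => Tn (j+2+i)) u : ℝ)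
              * ((((Tn j).filter fun x => G.Adj x u).card : ℝ)
                - (d:ℝ) * ((Tn j).card:ℝ) / (Fintype.card V : ℝ))| := by
          rw [abs_mul, abs_mul, abs_of_nonneg (by positivity : (0:ℝ) ≤ (d:ℝ)^j),
            abs_of_nonneg hProdnn]
      _ ≤ (d:ℝ)^j * 1
            * |∑ u ∈ Tn (j+1), (FbN G (K-j) (fun i => Tn (j+2+i)) u : ℝ)
              * ((((Tn j).filter fun x => G.Adj x u).card : ℝ)
                - (d:ℝ) * ((Tn j).card:ℝ) / (Fintype.card V : ℝ))| := by
          gcongr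
      _ < (d:ℝ)^j * 1 * (((d^(K-j) : ℕ):ℝ) * lam * (Fintype.card V : ℝ)) := by
          rw [mul_one]
          exact mul_lt_mul_of_pos_left hDlt (by positivity)
      _ = lam * (d:ℝ)^K * (Fintype.card V : ℝ) := by
          push_cast
          rw [mul_one, ← mul_assoc, ← mul_assoc, ← pow_add]
          rw [show j + (K-j) = K from by omega]
          ring
  have tele : HSeq G d K Tn 0 - HSeq G d K Tn (K+1)
      = ∑ j ∈ Finset.range (K+1), (HSeq G d K Tn j - HSeq G d K Tn (j+1)) :=
    (Finset.sum_range_sub' (HSeq G d K Tn) (K+1)).symm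
  calc |relCount (walkRel G (K+2)) T - ((walkRel G (K+2)).card : ℝ)
          * (∏ i, ((T i).card : ℝ)) / (Fintype.card V : ℝ)^(K+2)|
      = |∑ j ∈ Finset.range (K+1), (HSeq G d K Tn j - HSeq G d K Tn (j+1))| := by
        rw [hH0, ← tele, hHlast]
      _ ≤ ∑ j ∈ Finset.range (K+1), |HSeq G d K Tn j - HSeq G d K Tn (j+1)| :=
        Finset.abs_sum_le_sum_abs _ _
      _ < ∑ _j ∈ Finset.range (K+1), lam * (d:ℝ)^K * (Fintype.card V : ℝ) :=
        Finset.sum_lt_sum_of_nonempty Finset.nonempty_range_add_one hstep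
      _ = (K+1 : ℝ) * (lam * (d:ℝ)^K * (Fintype.card V : ℝ)) := by
        rw [Finset.sum_const, Finset.card_range, nsmul_eq_mul]
        push_cast
        ring
      _ = (((K+2 : ℕ) : ℝ) - 1) * (lam / (d:ℝ)) * ((walkRel G (K+2)).card : ℝ) := by
        rw [hcard]
        push_cast
        field_simp
        ring
end

section
/- Let A and B be relational structures of the same type τ with all relation symbols at most r-ary, such that for each relation symbol R, the relation R(A) is an ε_A-expander relation and R(B) is an ε_B-expander relation. Let C be any twisted product of A and B. Then for each relation symbol R, R(C) is an (ε_A + ε_B)-expander relation. -/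
open Finset

attribute [local instance] Classical.propDecidable

/-- A twisted product of relational structures `(A, RA)` and `(B, RB)` of type `ar : ι → ℕ`:
a family of relations `RC` on `A × B`, together with, for each symbol `i` and each tuple
`t ∈ RB i`, bijections `α i t j : A → π_B⁻¹(t j)` (injective maps into the fiber over `t j`)
such that `x ∈ RA i ↔ (α i t · (x ·)) ∈ RC i`, the second projection is a homomorphism, and
every tuple of `RC i` arises as such an image. -/
structure TwistedProduct {ι A B : Type*} (ar : ι → ℕ)
    (RA : ∀ i, Finset (Fin (ar i) → A))
    (RB : ∀ i, Finset (Fin (ar i) → B))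
    (RC : ∀ i, Finset (Fin (ar i) → A × B)) where
  α : ∀ i, (Fin (ar i) → B) → Fin (ar i) → A → A × B
  α_inj : ∀ i t, t ∈ RB i → ∀ j, Function.Injective (α i t j)
  α_snd : ∀ i t, t ∈ RB i → ∀ j x, (α i t j x).2 = t j
  mem_iff : ∀ i t, t ∈ RB i → ∀ x : Fin (ar i) → A,
    x ∈ RA i ↔ (fun j => α i t j (x j)) ∈ RC i
  proj_mem : ∀ i, ∀ u ∈ RC i, (fun j => (u j).2) ∈ RB i
  exists_preimage : ∀ i, ∀ u ∈ RC i,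
    ∃ x ∈ RA i, ∀ j, α i (fun j' => (u j').2) j (x j) = u j

/-- The degree of an element: the number of relational tuples containing it,
with multiplicity. -/
noncomputable def degree {ι X : Type*} [Fintype ι] (ar : ι → ℕ)
    (R : ∀ i, Finset (Fin (ar i) → X)) (x : X) : ℕ :=
  ∑ i, ∑ t ∈ R i, (Finset.univ.filter fun j => t j = x).card

/-- The maximal degree `Δ` of a relational structure. -/
noncomputable def maxDegree {ι X : Type*} [Fintype ι] [Fintype X] (ar : ι → ℕ)
    (R : ∀ i, Finset (Fin (ar i) → X)) : ℕ :=
  Finset.univ.sup (degree ar R)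

/-- `f` is a homomorphism of relational structures. -/
def IsHom {ι X Y : Type*} (ar : ι → ℕ) (RX : ∀ i, Finset (Fin (ar i) → X))
    (RY : ∀ i, Finset (Fin (ar i) → Y)) (f : X → Y) : Prop :=
  ∀ i, ∀ t ∈ RX i, (fun j => f (t j)) ∈ RY i

/-- Lemma 5: any twisted product of an `ε_A`-expander and an `ε_B`-expander is an
`(ε_A + ε_B)`-expander (relationwise). -/
theorem twistedProduct_isExpanderRel
    {ι A B : Type*} [Fintype A] [Fintype B] (ar : ι → ℕ) (r : ℕ) (har : ∀ i, ar i ≤ r)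
    (RA : ∀ i, Finset (Fin (ar i) → A)) (RB : ∀ i, Finset (Fin (ar i) → B))
    (RC : ∀ i, Finset (Fin (ar i) → A × B))
    (T : TwistedProduct ar RA RB RC) (εA εB : ℝ)
    (hA : ∀ i, IsExpanderRel εA (RA i)) (hB : ∀ i, IsExpanderRel εB (RB i)) :
    ∀ i, IsExpanderRel (εA + εB) (RC i) := by
  intro i Ts
  -- positivity facts
  have hpA : 0 < εA * ((RA i).card : ℝ) := lt_of_le_of_lt (abs_nonneg _) (hA i fun _ => ∅)
  have hpB : 0 < εB * ((RB i).card : ℝ) := lt_of_le_of_lt (abs_nonneg _) (hB i fun _ => ∅)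
  have hRAne : (RA i).Nonempty := by
    rw [Finset.nonempty_iff_ne_empty]; intro h; rw [h] at hpA; simp at hpA
  have hRBne : (RB i).Nonempty := by
    rw [Finset.nonempty_iff_ne_empty]; intro h; rw [h] at hpB; simp at hpB
  have hRApos : (0:ℝ) < (RA i).card := by exact_mod_cast Finset.card_pos.mpr hRAne
  have hRBpos : (0:ℝ) < (RB i).card := by exact_mod_cast Finset.card_pos.mpr hRBne
  have hεA : 0 < εA := by nlinarith
  have hεB : 0 < εB := by nlinarith
  obtain ⟨x₀, hx₀⟩ := hRAne
  obtain ⟨t₀, ht₀⟩ := hRBne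
  have hApow : (0:ℝ) < (Fintype.card A : ℝ) ^ ar i := by
    rcases Nat.eq_zero_or_pos (ar i) with h | h
    · simp [h]
    · have hne : Nonempty A := ⟨x₀ ⟨0, h⟩⟩
      have hc := Fintype.card_pos_iff.mpr hne
      positivity
  have hBpow : (0:ℝ) < (Fintype.card B : ℝ) ^ ar i := by
    rcases Nat.eq_zero_or_pos (ar i) with h | h
    · simp [h]
    · have hne : Nonempty B := ⟨t₀ ⟨0, h⟩⟩
      have hc := Fintype.card_pos_iff.mpr hne
      positivity
  -- transport of sums along the bijection RB × RA ≃ RC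
  have key : ∀ f : (Fin (ar i) → A × B) → ℝ,
      ∑ u ∈ RC i, f u = ∑ p ∈ (RB i) ×ˢ (RA i), f (fun j => T.α i p.1 j (p.2 j)) := by
    intro f
    refine (Finset.sum_bij (fun p (_ : p ∈ (RB i) ×ˢ (RA i)) => fun j => T.α i p.1 j (p.2 j))
      ?_ ?_ ?_ ?_).symm
    · intro p hp
      rw [Finset.mem_product] at hp
      exact (T.mem_iff i p.1 hp.1 p.2).mp hp.2
    · intro p hp q hq h
      rw [Finset.mem_product] at hp hq
      have ht : p.1 = q.1 := by
        funext j
        rw [← T.α_snd i p.1 hp.1 j (p.2 j), ← T.α_snd i q.1 hq.1 j (q.2 j)]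
        exact congrArg Prod.snd (congrFun h j)
      have hx : p.2 = q.2 := by
        funext j
        apply T.α_inj i q.1 hq.1 j
        have hj := congrFun h j
        rw [ht] at hj
        exact hj
      exact Prod.ext ht hx
    · intro u hu
      obtain ⟨x, hx, hxe⟩ := T.exists_preimage i u hu
      exact ⟨(fun j => (u j).2, x),
        Finset.mem_product.mpr ⟨T.proj_mem i u hu, hx⟩, funext hxe⟩
    · intro p hp
      rfl
  have hcard : ((RC i).card : ℝ) = ((RB i).card : ℝ) * ((RA i).card : ℝ) := by
    have h1 := key (fun _ => (1:ℝ))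
    simpa using h1
  -- split relCount over RC into a sum over RB of counts in RA
  have hsplit : relCount (RC i) Ts
      = ∑ t ∈ RB i, relCount (RA i) (fun j => univ.filter fun a => T.α i t j a ∈ Ts j) := by
    rw [relCount, Finset.card_filter]
    push_cast
    rw [key (fun u => if ∀ j, u j ∈ Ts j then (1:ℝ) else 0), Finset.sum_product]
    refine Finset.sum_congr rfl fun t ht => ?_
    rw [relCount, Finset.card_filter]
    push_cast
    refine Finset.sum_congr rfl fun x hx => ?_
    simp [Finset.mem_filter]
  -- fiber counts in A
  have hS : ∀ t ∈ RB i, ∀ j, (((univ.filter fun a => T.α i t j a ∈ Ts j).card : ℝ))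
      = ∑ a : A, if (a, t j) ∈ Ts j then (1:ℝ) else 0 := by
    intro t ht j
    have hβ : Function.Bijective (fun a => (T.α i t j a).1) := by
      rw [← Finite.injective_iff_bijective]
      intro a b h
      apply T.α_inj i t ht j
      exact Prod.ext h (by rw [T.α_snd i t ht j a, T.α_snd i t ht j b])
    rw [Finset.card_filter]
    push_cast
    rw [← hβ.sum_comp (fun a => if (a, t j) ∈ Ts j then (1:ℝ) else 0)]
    refine Finset.sum_congr rfl fun a _ => ?_
    have : T.α i t j a = ((T.α i t j a).1, t j) := Prod.ext rfl (T.α_snd i t ht j a)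
    rw [this]
  -- Step 1: apply the expander property of RA for each t ∈ RB
  have hstep1 : |relCount (RC i) Ts -
      ∑ t ∈ RB i, ((RA i).card : ℝ) *
        (∏ j, ∑ a : A, if (a, t j) ∈ Ts j then (1:ℝ) else 0) / (Fintype.card A : ℝ) ^ ar i|
      < ((RB i).card : ℝ) * (εA * (RA i).card) := by
    rw [hsplit, ← Finset.sum_sub_distrib]
    calc |∑ t ∈ RB i, (relCount (RA i) (fun j => univ.filter fun a => T.α i t j a ∈ Ts j) -
            ((RA i).card : ℝ) * (∏ j, ∑ a : A, if (a, t j) ∈ Ts j then (1:ℝ) else 0) /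
              (Fintype.card A : ℝ) ^ ar i)|
        ≤ ∑ t ∈ RB i, |relCount (RA i) (fun j => univ.filter fun a => T.α i t j a ∈ Ts j) -
            ((RA i).card : ℝ) * (∏ j, ∑ a : A, if (a, t j) ∈ Ts j then (1:ℝ) else 0) /
              (Fintype.card A : ℝ) ^ ar i| := Finset.abs_sum_le_sum_abs _ _
      _ < ∑ _t ∈ RB i, εA * ((RA i).card : ℝ) := by
          refine Finset.sum_lt_sum_of_nonempty ⟨t₀, ht₀⟩ fun t ht => ?_
          have h := hA i (fun j => univ.filter fun a => T.α i t j a ∈ Ts j)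
          rwa [Finset.prod_congr rfl (fun j _ => hS t ht j)] at h
      _ = ((RB i).card : ℝ) * (εA * (RA i).card) := by
          rw [Finset.sum_const, nsmul_eq_mul]
  -- Step 2: double counting W
  have hW : ∑ t ∈ RB i, (∏ j, ∑ a : A, if (a, t j) ∈ Ts j then (1:ℝ) else 0)
      = ∑ x : Fin (ar i) → A, relCount (RB i) (fun j => univ.filter fun b => (x j, b) ∈ Ts j) := by
    calc ∑ t ∈ RB i, (∏ j, ∑ a : A, if (a, t j) ∈ Ts j then (1:ℝ) else 0)
        = ∑ t ∈ RB i, ∑ x : Fin (ar i) → A, ∏ j, (if (x j, t j) ∈ Ts j then (1:ℝ) else 0) := by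
          refine Finset.sum_congr rfl fun t _ => ?_
          rw [Finset.prod_univ_sum (fun _ => (univ : Finset A))
            (fun j a => if (a, t j) ∈ Ts j then (1:ℝ) else 0), Fintype.piFinset_univ]
      _ = ∑ x : Fin (ar i) → A, ∑ t ∈ RB i, ∏ j, (if (x j, t j) ∈ Ts j then (1:ℝ) else 0) :=
          Finset.sum_comm
      _ = ∑ x : Fin (ar i) → A, relCount (RB i) (fun j => univ.filter fun b => (x j, b) ∈ Ts j) := by
          refine Finset.sum_congr rfl fun x _ => ?_
          rw [relCount, Finset.card_filter]
          push_cast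
          refine Finset.sum_congr rfl fun t _ => ?_
          rw [Finset.prod_boole]
          simp [Finset.mem_filter]
  -- counting Ts j by fibers of the first projection
  have hfiberN : ∀ j (a : A), ((Ts j).filter fun p => p.1 = a).card
      = (univ.filter fun b => (a, b) ∈ Ts j).card := by
    intro j a
    refine Finset.card_bij (fun p _ => p.2) ?_ ?_ ?_
    · intro p hp
      obtain ⟨h1, h2⟩ := Finset.mem_filter.mp hp
      simp only [Finset.mem_filter, Finset.mem_univ, true_and]
      rw [← h2]
      simpa using h1
    · intro p hp q hq h
      have h1 := (Finset.mem_filter.mp hp).2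
      have h2 := (Finset.mem_filter.mp hq).2
      exact Prod.ext (h1.trans h2.symm) h
    · intro b hb
      simp only [Finset.mem_filter, Finset.mem_univ, true_and] at hb
      exact ⟨(a, b), Finset.mem_filter.mpr ⟨hb, rfl⟩, rfl⟩
  have hfiber : ∀ j, ((Ts j).card : ℝ)
      = ∑ a : A, ((univ.filter fun b => (a, b) ∈ Ts j).card : ℝ) := by
    intro j
    have h := Finset.card_eq_sum_card_fiberwise
      (f := Prod.fst) (s := Ts j) (t := (univ : Finset A)) (fun p _ => Finset.mem_univ _)
    rw [h]
    push_cast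
    exact Finset.sum_congr rfl fun a _ => by rw [hfiberN j a]
  have hT : ∑ x : Fin (ar i) → A, ∏ j, ((univ.filter fun b => (x j, b) ∈ Ts j).card : ℝ)
      = ∏ j, ((Ts j).card : ℝ) := by
    rw [show (univ : Finset (Fin (ar i) → A)) = Fintype.piFinset (fun _ => (univ : Finset A))
        from Fintype.piFinset_univ.symm,
      ← Finset.prod_univ_sum (fun _ => (univ : Finset A))
        (fun j a => ((univ.filter fun b => (a, b) ∈ Ts j).card : ℝ))]
    exact Finset.prod_congr rfl fun j _ => (hfiber j).symm
  have hcardfun : ((Fintype.card (Fin (ar i) → A) : ℝ)) = (Fintype.card A : ℝ) ^ ar i := by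
    rw [Fintype.card_fun]
    push_cast
    simp
  -- Step 2 bound
  have hstep2 : |(∑ t ∈ RB i, (∏ j, ∑ a : A, if (a, t j) ∈ Ts j then (1:ℝ) else 0)) -
      ((RB i).card : ℝ) * (∏ j, ((Ts j).card : ℝ)) / (Fintype.card B : ℝ) ^ ar i|
      < (Fintype.card A : ℝ) ^ ar i * (εB * (RB i).card) := by
    rw [hW]
    have e2 : ((RB i).card : ℝ) * (∏ j, ((Ts j).card : ℝ)) / (Fintype.card B : ℝ) ^ ar i
        = ∑ x : Fin (ar i) → A, ((RB i).card : ℝ) *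
            (∏ j, ((univ.filter fun b => (x j, b) ∈ Ts j).card : ℝ)) /
            (Fintype.card B : ℝ) ^ ar i := by
      rw [← hT, Finset.mul_sum, Finset.sum_div]
    rw [e2, ← Finset.sum_sub_distrib]
    calc |∑ x : Fin (ar i) → A,
          (relCount (RB i) (fun j => univ.filter fun b => (x j, b) ∈ Ts j) -
            ((RB i).card : ℝ) * (∏ j, ((univ.filter fun b => (x j, b) ∈ Ts j).card : ℝ)) /
            (Fintype.card B : ℝ) ^ ar i)|
        ≤ ∑ x : Fin (ar i) → A,
          |relCount (RB i) (fun j => univ.filter fun b => (x j, b) ∈ Ts j) -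
            ((RB i).card : ℝ) * (∏ j, ((univ.filter fun b => (x j, b) ∈ Ts j).card : ℝ)) /
            (Fintype.card B : ℝ) ^ ar i| := Finset.abs_sum_le_sum_abs _ _
      _ < ∑ _x : Fin (ar i) → A, εB * ((RB i).card : ℝ) :=
          Finset.sum_lt_sum_of_nonempty ⟨x₀, Finset.mem_univ x₀⟩
            (fun x _ => hB i (fun j => univ.filter fun b => (x j, b) ∈ Ts j))
      _ = (Fintype.card A : ℝ) ^ ar i * (εB * (RB i).card) := by
          rw [Finset.sum_const, nsmul_eq_mul, Finset.card_univ, hcardfun]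
  -- final assembly
  have habs : relCount (RC i) Ts -
        ((RC i).card : ℝ) * (∏ j, ((Ts j).card : ℝ)) / (Fintype.card (A × B) : ℝ) ^ ar i
      = (relCount (RC i) Ts -
          ∑ t ∈ RB i, (((RA i).card : ℝ) *
            ∏ j, ∑ a : A, if (a, t j) ∈ Ts j then (1:ℝ) else 0) / (Fintype.card A : ℝ) ^ ar i)
        + (((RA i).card : ℝ) / (Fintype.card A : ℝ) ^ ar i) *
          ((∑ t ∈ RB i, ∏ j, ∑ a : A, if (a, t j) ∈ Ts j then (1:ℝ) else 0) -
            ((RB i).card : ℝ) * (∏ j, ((Ts j).card : ℝ)) / (Fintype.card B : ℝ) ^ ar i) := by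
    rw [hcard, Fintype.card_prod, ← Finset.sum_div, ← Finset.mul_sum]
    push_cast
    rw [mul_pow]
    field_simp
    ring
  rw [habs]
  refine lt_of_le_of_lt (abs_add_le _ _) ?_
  rw [abs_mul, abs_of_pos (div_pos hRApos hApow)]
  have h2 := mul_lt_mul_of_pos_left hstep2 (div_pos hRApos hApow)
  have hbound : ((RB i).card : ℝ) * (εA * ((RA i).card : ℝ)) +
      (((RA i).card : ℝ) / (Fintype.card A : ℝ) ^ ar i) *
        ((Fintype.card A : ℝ) ^ ar i * (εB * ((RB i).card : ℝ)))
      = (εA + εB) * ((RC i).card : ℝ) := by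
    rw [hcard]
    field_simp
  linarith [hstep1, h2]
end

section
/- Let C be a twisted product of relational structures A and B of type τ, with maximal degrees Δ(A) and Δ(B). Then Δ(C) ≤ Δ(A)·Δ(B). -/
open Finset

attribute [local instance] Classical.propDecidable

lemma filter_coord_card_le {ι X : Type*} [Fintype ι] [Fintype X] (ar : ι → ℕ)
    (R : ∀ i, Finset (Fin (ar i) → X)) (i : ι) (j : Fin (ar i)) (a : X) :
    ((R i).filter fun x => x j = a).card ≤ maxDegree ar R := by
  have h1 : ((R i).filter fun x => x j = a).card
      ≤ ∑ x ∈ R i, (Finset.univ.filter fun j' => x j' = a).card := by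
    rw [Finset.card_filter]
    apply Finset.sum_le_sum
    intro x hx
    by_cases h : x j = a
    · simp only [h, if_true]
      exact Finset.card_pos.mpr ⟨j, by simp [h]⟩
    · simp [h]
  have h2 : ∑ x ∈ R i, (Finset.univ.filter fun j' => x j' = a).card ≤ degree ar R a := by
    rw [degree]
    exact Finset.single_le_sum
      (f := fun i => ∑ t ∈ R i, (Finset.univ.filter fun j => t j = a).card)
      (fun _ _ => Nat.zero_le _) (Finset.mem_univ i)
  have h3 : degree ar R a ≤ maxDegree ar R := Finset.le_sup (Finset.mem_univ a)
  exact le_trans h1 (le_trans h2 h3)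

/-- The maximal degree of a twisted product is at most the product of the maximal degrees. -/
theorem twistedProduct_maxDegree_le
    {ι A B : Type*} [Fintype ι] [Fintype A] [Fintype B] (ar : ι → ℕ)
    (RA : ∀ i, Finset (Fin (ar i) → A)) (RB : ∀ i, Finset (Fin (ar i) → B))
    (RC : ∀ i, Finset (Fin (ar i) → A × B))
    (T : TwistedProduct ar RA RB RC) :
    maxDegree ar RC ≤ maxDegree ar RA * maxDegree ar RB := by
  apply Finset.sup_le
  intro c _
  -- For each i, reindex the sum over RC i by RB i ×ˢ RA i
  have key : ∀ i, ∑ u ∈ RC i, (Finset.univ.filter fun j => u j = c).card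
      = ∑ p ∈ (RB i) ×ˢ (RA i),
          (Finset.univ.filter fun j => T.α i p.1 j (p.2 j) = c).card := by
    intro i
    refine (Finset.sum_bij (fun p hp => fun j => T.α i p.1 j (p.2 j)) ?_ ?_ ?_ ?_).symm
    · rintro ⟨t, x⟩ hp
      obtain ⟨ht, hx⟩ := Finset.mem_product.mp hp
      exact (T.mem_iff i t ht x).mp hx
    · rintro ⟨t, x⟩ hp ⟨t', x'⟩ hp' h
      obtain ⟨ht, hx⟩ := Finset.mem_product.mp hp
      obtain ⟨ht', hx'⟩ := Finset.mem_product.mp hp'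
      have htt : t = t' := by
        funext j
        have := congrArg (fun f => (f j).2) h
        simpa [T.α_snd i t ht j, T.α_snd i t' ht' j] using this
      subst htt
      have hxx : x = x' := by
        funext j
        exact T.α_inj i t ht j (congrFun h j)
      simp [hxx]
    · intro u hu
      obtain ⟨x, hx, hux⟩ := T.exists_preimage i u hu
      have ht := T.proj_mem i u hu
      refine ⟨⟨fun j => (u j).2, x⟩, Finset.mem_product.mpr ⟨ht, hx⟩, ?_⟩
      funext j
      simpa using hux j
    · intros; rfl
  calc degree ar RC c
      = ∑ i, ∑ u ∈ RC i, (Finset.univ.filter fun j => u j = c).card := by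
        unfold degree; congr!
    _ = ∑ i, ∑ t ∈ RB i, ∑ x ∈ RA i,
          (Finset.univ.filter fun j => T.α i t j (x j) = c).card := by
        simp only [key, Finset.sum_product]
    _ ≤ ∑ i, ∑ t ∈ RB i,
          (Finset.univ.filter fun j => t j = c.2).card * maxDegree ar RA := by
        apply Finset.sum_le_sum
        intro i _
        apply Finset.sum_le_sum
        intro t ht
        have swap : ∑ x ∈ RA i, (Finset.univ.filter fun j => T.α i t j (x j) = c).card
            = ∑ j ∈ Finset.univ.filter (fun j => t j = c.2),
                ((RA i).filter fun x => T.α i t j (x j) = c).card := by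
          simp only [Finset.card_filter]
          rw [Finset.sum_comm]
          rw [← Finset.sum_filter_of_ne (p := fun j => t j = c.2)]
          intro j _ hj
          by_contra h
          have hne : ((RA i).filter fun x => T.α i t j (x j) = c).Nonempty := by
            rw [Finset.filter_nonempty_iff]
            by_contra hno
            push_neg at hno
            apply hj
            apply Finset.sum_eq_zero
            intro x hx
            simp [hno x hx]
          obtain ⟨x, hx⟩ := hne
          have hc := (Finset.mem_filter.mp hx).2
          have hs := T.α_snd i t ht j (x j)
          rw [hc] at hs
          exact h hs.symm
        rw [swap]
        calc ∑ j ∈ Finset.univ.filter (fun j => t j = c.2),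
              ((RA i).filter fun x => T.α i t j (x j) = c).card
            ≤ ∑ _j ∈ Finset.univ.filter (fun j => t j = c.2), maxDegree ar RA := by
              apply Finset.sum_le_sum
              intro j _
              rcases Finset.eq_empty_or_nonempty
                  ((RA i).filter fun x => T.α i t j (x j) = c) with he | ⟨x₀, hx₀⟩
              · simp [he]
              · have hsub : ((RA i).filter fun x => T.α i t j (x j) = c)
                    ⊆ (RA i).filter fun x => x j = x₀ j := by
                  intro x hx
                  rw [Finset.mem_filter] at hx ⊢
                  refine ⟨hx.1, T.α_inj i t ht j ?_⟩
                  rw [hx.2, (Finset.mem_filter.mp hx₀).2]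
                exact le_trans (Finset.card_le_card hsub)
                  (filter_coord_card_le ar RA i j (x₀ j))
          _ = (Finset.univ.filter (fun j => t j = c.2)).card * maxDegree ar RA := by
              rw [Finset.sum_const, smul_eq_mul]
    _ = (∑ i, ∑ t ∈ RB i, (Finset.univ.filter fun j => t j = c.2).card)
          * maxDegree ar RA := by
        rw [Finset.sum_mul]
        exact Finset.sum_congr rfl fun i _ => (Finset.sum_mul _ _ _).symm
    _ = degree ar RB c.2 * maxDegree ar RA := rfl
    _ ≤ maxDegree ar RB * maxDegree ar RA :=
        Nat.mul_le_mul_right _ (Finset.le_sup (Finset.mem_univ c.2))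
    _ = maxDegree ar RA * maxDegree ar RB := Nat.mul_comm _ _
end

section
/- Let A, B, T be relational structures of type τ where every relation symbol is at most r-ary. Suppose every relation of A is an ε-expander relation with ε·|T|^r < 1, and let C be a twisted product of A and B. Then B admits a homomorphism to T if and only if C admits a homomorphism to T. -/
open Finset

attribute [local instance] Classical.propDecidable

/-- Lemma (exphely): if every relation of `A` is an ε-expander with `ε·|T|^r < 1` and `C`
is a twisted product of `A` and `B`, then `B` is homomorphic to `T` iff `C` is. -/
theorem twistedProduct_hom_iff
    {ι A B T : Type*} [Fintype A] [Fintype B] [Fintype T] [Nonempty A] [Nonempty T]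
    (ar : ι → ℕ) (r : ℕ) (har : ∀ i, ar i ≤ r)
    (RA : ∀ i, Finset (Fin (ar i) → A)) (RB : ∀ i, Finset (Fin (ar i) → B))
    (RC : ∀ i, Finset (Fin (ar i) → A × B)) (RT : ∀ i, Finset (Fin (ar i) → T))
    (TP : TwistedProduct ar RA RB RC) (ε : ℝ)
    (hexp : ∀ i, IsExpanderRel ε (RA i)) (hRA : ∀ i, (RA i).Nonempty)
    (hε : ε * (Fintype.card T : ℝ) ^ r < 1) :
    (∃ g : B → T, IsHom ar RB RT g) ↔ (∃ h : A × B → T, IsHom ar RC RT h) := by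

  classical
  constructor
  · rintro ⟨g, hg⟩
    exact ⟨fun p => g p.2, fun i u hu => hg i _ (TP.proj_mem i u hu)⟩
  · rintro ⟨h, hh⟩
    have cardTpos : (0:ℝ) < Fintype.card T := by
      exact_mod_cast Fintype.card_pos
    have cardApos : (0:ℝ) < Fintype.card A := by
      exact_mod_cast Fintype.card_pos
    have oneT : (1:ℝ) ≤ Fintype.card T := by
      exact_mod_cast Fintype.card_pos
    -- choose a popular colour for each b
    have hgex : ∀ b : B, ∃ s : T, (Fintype.card A : ℝ) / Fintype.card T ≤
        ((univ.filter fun a : A => h (a, b) = s).card : ℝ) := by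
      intro b
      have hsum : ∑ s : T, ((univ.filter fun a : A => h (a, b) = s).card : ℝ)
          = (Fintype.card A : ℝ) := by
        rw [← Nat.cast_sum]
        congr 1
        rw [← Finset.card_eq_sum_card_fiberwise (f := fun a : A => h (a, b))
          (fun x _ => mem_univ _)]
        exact Finset.card_univ
      have hle : ∑ _s : T, (Fintype.card A : ℝ) / Fintype.card T
          ≤ ∑ s : T, ((univ.filter fun a : A => h (a, b) = s).card : ℝ) := by
        rw [hsum, Finset.sum_const, Finset.card_univ, nsmul_eq_mul]
        rw [mul_div_cancel₀]
        exact ne_of_gt cardTpos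
      obtain ⟨s, _, hs⟩ := Finset.exists_le_of_sum_le univ_nonempty hle
      exact ⟨s, hs⟩
    choose g hgprop using hgex
    refine ⟨g, ?_⟩
    intro i t ht
    set S : Fin (ar i) → Finset A :=
      fun j => univ.filter fun a => h (TP.α i t j a) = g (t j) with hSdef
    have hα : ∀ j a, TP.α i t j a = ((TP.α i t j a).1, t j) := by
      intro j a
      rw [← TP.α_snd i t ht j a]
    have hcardS : ∀ j, (Fintype.card A : ℝ) / Fintype.card T ≤ ((S j).card : ℝ) := by
      intro j
      have hinj : Function.Injective (fun a => (TP.α i t j a).1) := by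
        intro a a' haa
        apply TP.α_inj i t ht j
        rw [hα j a, hα j a']
        simp only at haa
        rw [haa]
      have hbij := Finite.injective_iff_bijective.mp hinj
      have hcard : (S j).card = (univ.filter fun a : A => h (a, t j) = g (t j)).card := by
        apply Finset.card_bij (fun a _ => (TP.α i t j a).1)
        · intro a ha
          simp only [hSdef, mem_filter, mem_univ, true_and] at ha ⊢
          rw [← ha, hα j a]
        · intro a _ a' _ e
          exact hinj e
        · intro b hb
          obtain ⟨a, ha⟩ := hbij.2 b
          refine ⟨a, ?_, ha⟩
          simp only [mem_filter, mem_univ, true_and] at hb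
          simp only [hSdef, mem_filter, mem_univ, true_and]
          rw [hα j a]
          simp only at ha
          rw [ha]
          exact hb
      rw [hcard]
      exact hgprop (t j)
    have hexpi := hexp i S
    have hRApos : (0:ℝ) < (RA i).card := by
      exact_mod_cast (hRA i).card_pos
    have hεpos : 0 < ε := by
      have h1 : (0:ℝ) ≤ |relCount (RA i) S - (RA i).card * (∏ j, ((S j).card : ℝ))
          / (Fintype.card A : ℝ) ^ (ar i)| := abs_nonneg _
      nlinarith
    have hprod : ((Fintype.card A : ℝ)/Fintype.card T)^(ar i) ≤ ∏ j, ((S j).card : ℝ) := by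
      calc ((Fintype.card A : ℝ)/Fintype.card T)^(ar i)
          = ∏ _j : Fin (ar i), ((Fintype.card A : ℝ)/Fintype.card T) := by
            simp [div_pow]
        _ ≤ ∏ j, ((S j).card : ℝ) :=
            Finset.prod_le_prod (fun _ _ => by positivity) (fun j _ => hcardS j)
    have h4 : (RA i).card / (Fintype.card T:ℝ)^(ar i)
        ≤ (RA i).card * (∏ j, ((S j).card:ℝ)) / (Fintype.card A:ℝ)^(ar i) := by
      rw [div_le_div_iff₀ (by positivity) (by positivity)]
      have : ((RA i).card : ℝ) * (Fintype.card A:ℝ)^(ar i)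
          = (RA i).card * ((Fintype.card A:ℝ)/Fintype.card T)^(ar i)
            * (Fintype.card T:ℝ)^(ar i) := by
        rw [div_pow]
        rw [mul_assoc, div_mul_cancel₀ _ (by positivity)]
      rw [this]
      exact mul_le_mul_of_nonneg_right (mul_le_mul_of_nonneg_left hprod hRApos.le) (by positivity)
    have h5 : (RA i).card / (Fintype.card T:ℝ)^r ≤ (RA i).card / (Fintype.card T:ℝ)^(ar i) := by
      have hpow : (Fintype.card T:ℝ)^(ar i) ≤ (Fintype.card T:ℝ)^r :=
        pow_le_pow_right₀ oneT (har i)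
      exact div_le_div_of_nonneg_left hRApos.le (by positivity) hpow
    have h6 : ε < 1 / (Fintype.card T:ℝ)^r := by
      rw [lt_div_iff₀ (by positivity)]
      exact hε
    have h7 : ε * (RA i).card < (RA i).card / (Fintype.card T:ℝ)^r := by
      rw [div_eq_mul_one_div]
      calc ε * (RA i).card = (RA i).card * ε := mul_comm _ _
        _ < (RA i).card * (1 / (Fintype.card T:ℝ)^r) := by
            exact mul_lt_mul_of_pos_left h6 hRApos
    have hlb := (abs_lt.mp hexpi).1
    have key : 0 < relCount (RA i) S := by linarith
    have hne : ((RA i).filter fun x => ∀ j, x j ∈ S j).Nonempty := by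
      rw [← Finset.card_pos]
      unfold relCount at key
      exact_mod_cast key
    obtain ⟨x, hx⟩ := hne
    rw [Finset.mem_filter] at hx
    have hc : (fun j => TP.α i t j (x j)) ∈ RC i := (TP.mem_iff i t ht x).mp hx.1
    have hht := hh i _ hc
    have heq : (fun j => h (TP.α i t j (x j))) = fun j => g (t j) := by
      funext j
      have := hx.2 j
      simp only [hSdef, mem_filter, mem_univ, true_and] at this
      exact this
    rw [← heq]
    exact hht
end
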